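/- Let q be a prime power, let d ≥ 2, let Tr denote the trace map from F_{q^d} to F_q, let G = F_{q^d}^*/F_q^* be the quotient group, and let L₀ ⊆ G be the image under the quotient map of the set {x ∈ F_{q^d}^* : Tr(x) = 0}. Then L₀ is a ((q^d−1)/(q−1), (q^{d−1}−1)/(q−1), (q^{d−2}−1)/(q−1)) difference set in G. -/

import Mathlib

/-- `D` is a `(v,K,λ)` difference set in the group `G`: `G` has order `v`, `D` has `K`
elements, and every nonidentity `g ∈ G` can be written as `d₁ * d₂⁻¹` with `d₁, d₂ ∈ D`
in exactly `lam` ways. -/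
def IsDiffSet {G : Type*} [Group G] (v K lam : ℕ) (D : Set G) : Prop :=
  Nat.card G = v ∧ Nat.card D = K ∧
  ∀ g : G, g ≠ 1 →
    Nat.card {p : G × G // p.1 ∈ D ∧ p.2 ∈ D ∧ p.1 * p.2⁻¹ = g} = lam

section Aux

/-- If `S` is a union of cosets of `H`, then `|mk '' S| * |H| = |S|`. -/
lemma card_image_mk_mul {Gr : Type*} [Group Gr] (H : Subgroup Gr) (S : Set Gr)
    (hS : QuotientGroup.mk ⁻¹' ((QuotientGroup.mk (s := H)) '' S) = S) :
    Nat.card ((QuotientGroup.mk (s := H)) '' S) * Nat.card H = Nat.card S := by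
  have h := Nat.card_congr
    (QuotientGroup.preimageMkEquivSubgroupProdSet H ((QuotientGroup.mk (s := H)) '' S))
  rw [hS, Nat.card_prod] at h
  rw [h, mul_comm]

/-- Units lying in a submodule `W` of a finite field extension are in bijection with
the nonzero elements of `W`. -/
lemma card_units_mem {F E : Type*} [Field F] [Field E] [Algebra F E] [Finite E]
    (W : Submodule F E) :
    Nat.card {x : Eˣ // (x : E) ∈ W} = Nat.card W - 1 := by
  classical
  have e : {x : Eˣ // (x : E) ∈ W} ≃ {y : E // y ∈ W ∧ y ≠ 0} :=
    { toFun := fun x => ⟨(x : Eˣ), x.2, Units.ne_zero _⟩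
      invFun := fun y => ⟨Units.mk0 y.1 y.2.2, y.2.1⟩
      left_inv := fun x => Subtype.ext (Units.ext rfl)
      right_inv := fun y => rfl }
  have e2 : {y : E // y ∈ W ∧ y ≠ 0} ≃ {y : W // ¬ (y = 0)} :=
    { toFun := fun y => ⟨⟨y.1, y.2.1⟩, fun h => y.2.2 (by simpa [Subtype.ext_iff] using h)⟩
      invFun := fun y => ⟨y.1.1, y.1.2, fun h => y.2 (by exact Subtype.ext h)⟩
      left_inv := fun y => rfl
      right_inv := fun y => rfl }
  haveI : Fintype E := Fintype.ofFinite E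
  haveI : Fintype W := Fintype.ofFinite W
  rw [Nat.card_congr (e.trans e2), Nat.card_eq_fintype_card, Nat.card_eq_fintype_card,
    Fintype.card_subtype_compl, Fintype.card_subtype_eq (0 : W)]

end Aux

/-- The image `L₀` in `Eˣ ⧸ Fˣ` of the set of nonzero trace-zero elements of `E = F_{q^d}`
is a `((q^d-1)/(q-1), (q^{d-1}-1)/(q-1), (q^{d-2}-1)/(q-1))` difference set. -/
theorem stmt_1 (q d : ℕ) (hq : ∃ p n : ℕ, p.Prime ∧ 0 < n ∧ q = p ^ n) (hd : 2 ≤ d)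
    (F E : Type*) [Field F] [Field E] [Algebra F E] [Fintype F] [Fintype E]
    (hF : Fintype.card F = q) (hE : Fintype.card E = q ^ d) :
    IsDiffSet ((q ^ d - 1) / (q - 1)) ((q ^ (d - 1) - 1) / (q - 1))
      ((q ^ (d - 2) - 1) / (q - 1))
      ((QuotientGroup.mk (s := (Units.map (algebraMap F E).toMonoidHom).range)) ''
        {x : Eˣ | Algebra.trace F E (x : E) = 0}) := by
  classical
  have hq2 : 2 ≤ q := by
    obtain ⟨p, n, hp, hn, rfl⟩ := hq
    exact le_trans hp.two_le (Nat.le_self_pow hn.ne' p)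
  set H := (Units.map (algebraMap F E).toMonoidHom).range with hH
  set Tr := Algebra.trace F E with hTr
  -- basic dimension facts
  have hrank : Module.finrank F E = d := by
    have h := Module.card_eq_pow_finrank (K := F) (V := E)
    rw [hF, hE] at h
    exact (Nat.pow_right_injective hq2 h.symm)
  -- cardinality of submodules
  have cardSub : ∀ W : Submodule F E, Nat.card W = q ^ (Module.finrank F W) := by
    intro W
    haveI : Fintype W := Fintype.ofFinite W
    rw [Nat.card_eq_fintype_card, Module.card_eq_pow_finrank (K := F), hF]
  -- trace scaling
  have trmul : ∀ (x : E) (c : F), Tr (x * algebraMap F E c) = c * Tr x := by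
    intro x c
    rw [mul_comm, ← Algebra.smul_def, map_smul, smul_eq_mul]
  have hcoe : ∀ c : Fˣ, ((Units.map (algebraMap F E).toMonoidHom c : Eˣ) : E)
      = algebraMap F E (c : F) := fun c => rfl
  -- invariance lemma
  have hinv : ∀ (S : Set Eˣ),
      (∀ (x : Eˣ) (c : Fˣ), x ∈ S → x * Units.map (algebraMap F E).toMonoidHom c ∈ S) →
      QuotientGroup.mk ⁻¹' ((QuotientGroup.mk (s := H)) '' S) = S := by
    intro S hcl
    ext z
    simp only [Set.mem_preimage, Set.mem_image]
    constructor
    · rintro ⟨x, hx, hxz⟩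
      rw [QuotientGroup.eq] at hxz
      obtain ⟨c, hc⟩ := hxz
      have h := hcl x c hx
      rw [hc, mul_inv_cancel_left] at h
      exact h
    · intro hz; exact ⟨z, hz, rfl⟩
  -- cardinality of H
  have hinj : Function.Injective (Units.map (algebraMap F E).toMonoidHom) :=
    Units.map_injective (algebraMap F E).injective
  have cardH : Nat.card H = q - 1 := by
    rw [← Nat.card_congr (MonoidHom.ofInjective hinj).toEquiv, Nat.card_eq_fintype_card,
      Fintype.card_units, hF]
  have cardEu : Nat.card Eˣ = q ^ d - 1 := by
    rw [Nat.card_eq_fintype_card, Fintype.card_units, hE]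
  have hq1pos : 0 < q - 1 := by omega
  -- first component: order of the quotient group
  have hv : Nat.card (Eˣ ⧸ H) = (q ^ d - 1) / (q - 1) := by
    have h := Subgroup.card_eq_card_quotient_mul_card_subgroup H
    rw [cardH, cardEu] at h
    exact (Nat.div_eq_of_eq_mul_left hq1pos h).symm
  -- the trace-zero set
  set S₁ : Set Eˣ := {x : Eˣ | Tr (x : E) = 0} with hS₁
  have hS₁inv : QuotientGroup.mk ⁻¹' ((QuotientGroup.mk (s := H)) '' S₁) = S₁ := by
    apply hinv
    intro x c hx
    show Tr ((x * Units.map (algebraMap F E).toMonoidHom c : Eˣ) : E) = 0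
    rw [Units.val_mul, hcoe, trmul, hx, mul_zero]
  have cardS₁ : Nat.card S₁ = q ^ (d - 1) - 1 := by
    have hker : Module.finrank F (LinearMap.ker Tr) = d - 1 := by
      have h := LinearMap.finrank_range_add_finrank_ker Tr
      rw [hrank, LinearMap.range_eq_top.mpr (Algebra.trace_surjective F E),
        finrank_top, Module.finrank_self] at h
      omega
    have e : Nat.card S₁ = Nat.card {x : Eˣ // (x : E) ∈ LinearMap.ker Tr} :=
      Nat.card_congr (Equiv.subtypeEquivRight (fun x => by
        simp [hS₁, LinearMap.mem_ker]))
    rw [e, card_units_mem, cardSub, hker]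
  have hK : Nat.card ((QuotientGroup.mk (s := H)) '' S₁) = (q ^ (d - 1) - 1) / (q - 1) := by
    have h := card_image_mk_mul H S₁ hS₁inv
    rw [cardH, cardS₁] at h
    exact (Nat.div_eq_of_eq_mul_left hq1pos h.symm).symm
  refine ⟨hv, hK, ?_⟩
  -- the lambda count
  intro g hg
  obtain ⟨u, hu⟩ := QuotientGroup.mk_surjective g
  have hune : (u : E) ∉ Set.range (algebraMap F E) := by
    rintro ⟨c, hc⟩
    apply hg
    rw [← hu]
    rw [QuotientGroup.eq_one_iff]
    have hc0 : c ≠ 0 := by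
      rintro rfl
      exact Units.ne_zero u (by simpa using hc.symm)
    exact ⟨Units.mk0 c hc0, Units.ext (by simpa using hc)⟩
  -- the linear map y ↦ (Tr y, Tr (u*y))
  set T2 : E →ₗ[F] F := Tr ∘ₗ (LinearMap.mulLeft F (u : E)) with hT2
  set φ : E →ₗ[F] F × F := LinearMap.prod Tr T2 with hφ
  have hT2app : ∀ y : E, T2 y = Tr ((u : E) * y) := fun y => rfl
  have hφsurj : Function.Surjective φ := by
    obtain ⟨t, ht⟩ := Algebra.trace_surjective F E (1 : F)
    have hw : ∃ w : E, Tr w = 0 ∧ Tr ((u : E) * w) ≠ 0 := by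
      by_contra hcon
      push_neg at hcon
      apply hune
      refine ⟨Tr ((u : E) * t), ?_⟩
      have key : ∀ y : E, Algebra.traceForm F E ((algebraMap F E (Tr ((u : E) * t))) - u) y = 0 := by
        intro y
        have h0 : Tr (y - Tr y • t) = 0 := by
          rw [map_sub, map_smul, smul_eq_mul, ht, mul_one, sub_self]
        have h1 := hcon _ h0
        have h2 : (u : E) * (y - Tr y • t) = (u : E) * y - Tr y • ((u : E) * t) := by
          rw [mul_sub, mul_smul_comm]
        rw [h2, map_sub, map_smul, smul_eq_mul, sub_eq_zero] at h1
        rw [Algebra.traceForm_apply, sub_mul, map_sub, ← Algebra.smul_def, map_smul,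
          smul_eq_mul, h1]
        ring
      have h3 := (traceForm_nondegenerate F E).1 _ key
      rw [sub_eq_zero] at h3
      exact h3
    obtain ⟨w, hw0, hws⟩ := hw
    rintro ⟨a, b⟩
    refine ⟨a • t + ((b - a * Tr ((u : E) * t)) / Tr ((u : E) * w)) • w, ?_⟩
    have hφapp : ∀ y : E, φ y = (Tr y, Tr ((u : E) * y)) := fun y => rfl
    rw [hφapp]
    have e1 : Tr (a • t + ((b - a * Tr ((u : E) * t)) / Tr ((u : E) * w)) • w) = a := by
      rw [map_add, map_smul, map_smul, ht, hw0, smul_eq_mul, smul_eq_mul,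
        mul_one, mul_zero, add_zero]
    have e2 : Tr ((u : E) * (a • t + ((b - a * Tr ((u : E) * t)) / Tr ((u : E) * w)) • w)) = b := by
      rw [mul_add, mul_smul_comm, mul_smul_comm, map_add, map_smul, map_smul,
        smul_eq_mul, smul_eq_mul, div_mul_cancel₀ _ hws]
      ring
    rw [e1, e2]
  -- kernel dimension
  have hkerφ : Module.finrank F (LinearMap.ker φ) = d - 2 := by
    have h := LinearMap.finrank_range_add_finrank_ker φ
    rw [hrank, LinearMap.range_eq_top.mpr hφsurj, finrank_top, Module.finrank_prod,
      Module.finrank_self] at h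
    omega
  -- the set S₂
  set S₂ : Set Eˣ := {y : Eˣ | Tr (y : E) = 0 ∧ Tr ((u : E) * (y : E)) = 0} with hS₂
  have hS₂inv : QuotientGroup.mk ⁻¹' ((QuotientGroup.mk (s := H)) '' S₂) = S₂ := by
    apply hinv
    intro x c hx
    obtain ⟨hx1, hx2⟩ := hx
    constructor
    · show Tr ((x * Units.map (algebraMap F E).toMonoidHom c : Eˣ) : E) = 0
      rw [Units.val_mul, hcoe, trmul, hx1, mul_zero]
    · show Tr ((u : E) * ((x * Units.map (algebraMap F E).toMonoidHom c : Eˣ) : E)) = 0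
      rw [Units.val_mul, hcoe, ← mul_assoc, trmul, hx2, mul_zero]
  have cardS₂ : Nat.card S₂ = q ^ (d - 2) - 1 := by
    have e : Nat.card S₂ = Nat.card {x : Eˣ // (x : E) ∈ LinearMap.ker φ} :=
      Nat.card_congr (Equiv.subtypeEquivRight (fun x => by
        simp only [hS₂, Set.mem_setOf_eq, LinearMap.mem_ker, hφ, LinearMap.prod_apply,
          Function.prod, Prod.mk_eq_zero, hT2app]))
    rw [e, card_units_mem, cardSub, hkerφ]
  have hlam2 : Nat.card ((QuotientGroup.mk (s := H)) '' S₂) = (q ^ (d - 2) - 1) / (q - 1) := by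
    have h := card_image_mk_mul H S₂ hS₂inv
    rw [cardH, cardS₂] at h
    exact (Nat.div_eq_of_eq_mul_left hq1pos h.symm).symm
  set D := (QuotientGroup.mk (s := H)) '' S₁ with hD
  -- pairs ↔ single elements
  have epair : {p : (Eˣ ⧸ H) × (Eˣ ⧸ H) // p.1 ∈ D ∧ p.2 ∈ D ∧ p.1 * p.2⁻¹ = g} ≃
      {b : Eˣ ⧸ H // b ∈ D ∧ g * b ∈ D} :=
    { toFun := fun p => ⟨p.1.2, p.2.2.1, by
        have h : g * p.1.2 = p.1.1 := by
          calc g * p.1.2 = (p.1.1 * p.1.2⁻¹) * p.1.2 := by rw [p.2.2.2]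
          _ = p.1.1 := inv_mul_cancel_right _ _
        rw [h]; exact p.2.1⟩
      invFun := fun b => ⟨(g * b.1, b.1), b.2.2, b.2.1, by rw [mul_inv_cancel_right]⟩
      left_inv := fun p => Subtype.ext (Prod.ext
        (calc g * p.1.2 = (p.1.1 * p.1.2⁻¹) * p.1.2 := by rw [p.2.2.2]
          _ = p.1.1 := inv_mul_cancel_right _ _) rfl)
      right_inv := fun b => rfl }
  -- identification of the single-element set with mk '' S₂
  have hident : ∀ b : Eˣ ⧸ H, (b ∈ D ∧ g * b ∈ D) ↔ b ∈ (QuotientGroup.mk (s := H)) '' S₂ := by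
    intro b
    constructor
    · rintro ⟨⟨x, hx, hxb⟩, ⟨z, hz, hzgb⟩⟩
      refine ⟨x, ⟨hx, ?_⟩, hxb⟩
      have hub : (QuotientGroup.mk (s := H)) (u * x) = g * b := by
        rw [QuotientGroup.mk_mul, hu, hxb]
      rw [← hub] at hzgb
      rw [QuotientGroup.eq] at hzgb
      obtain ⟨c, hc⟩ := hzgb
      have hzc : z * Units.map (algebraMap F E).toMonoidHom c = u * x := by
        rw [hc, mul_inv_cancel_left]
      have hz0 : Tr ((z : Eˣ) : E) = 0 := hz
      have : Tr ((u : E) * (x : E)) = (c : F) * Tr ((z : Eˣ) : E) := by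
        rw [← Units.val_mul, ← hzc, Units.val_mul, hcoe, trmul]
      rw [hz0, mul_zero] at this
      exact this
    · rintro ⟨y, ⟨hy1, hy2⟩, hyb⟩
      constructor
      · exact ⟨y, hy1, hyb⟩
      · refine ⟨u * y, ?_, ?_⟩
        · simpa [hS₁, Units.val_mul] using hy2
        · rw [QuotientGroup.mk_mul, hu, hyb]
  calc Nat.card {p : (Eˣ ⧸ H) × (Eˣ ⧸ H) // p.1 ∈ D ∧ p.2 ∈ D ∧ p.1 * p.2⁻¹ = g}
      = Nat.card ((QuotientGroup.mk (s := H)) '' S₂) := by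
        rw [Nat.card_congr epair]
        exact Nat.card_congr (Equiv.subtypeEquivRight hident)
    _ = (q ^ (d - 2) - 1) / (q - 1) := hlam2
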